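/- arXiv:1205.1138 — 2 statements merged into one kernel-verified Lean document; each statement's English description precedes it below -/
import Mathlib

section
/- Suppose for some λ ∈ K the map λE + A : M → V is bijective. Then the quotient map [A] : M/M' → V/V' is surjective (hence bijective), where V' = range E and M' = A⁻¹(V'). -/
theorem stmt_16 {K : Type*} [Field K] {M V : Type*} [AddCommGroup M] [Module K M]
    [AddCommGroup V] [Module K V] [FiniteDimensional K M] [FiniteDimensional K V]
    (E A : M →ₗ[K] V)
    (h : ∃ lam : K, Function.Bijective (lam • E + A)) :
    Function.Surjective
      (Submodule.mapQ (Submodule.comap A (LinearMap.range E)) (LinearMap.range E) A le_rfl) := by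
  obtain ⟨lam, hb⟩ := h
  intro v
  induction v using Submodule.Quotient.mk_surjective _ |>.forall.2 with | _ v =>
  obtain ⟨m, hm⟩ := hb.2 v
  refine ⟨Submodule.Quotient.mk m, ?_⟩
  rw [Submodule.mapQ_apply, Submodule.Quotient.eq]
  refine ⟨(-lam) • m, ?_⟩
  have hm' : lam • E m + A m = v := hm
  rw [map_smul]
  rw [eq_sub_iff_add_eq, neg_smul, neg_add_eq_iff_eq_add, ← hm']
end

section
/- If (E,A) is a regular pencil (∃ λ, λE + A bijective), and (E',A') is its reduction (restrictions to M' = A⁻¹(range E) with codomain V' = range E), then (E',A') is a regular pencil: there exists λ with λE' + A' : M' → V' bijective. -/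
theorem stmt_19 {K : Type*} [Field K] [Infinite K] {M V : Type*} [AddCommGroup M] [Module K M]
    [AddCommGroup V] [Module K V] [FiniteDimensional K M] [FiniteDimensional K V]
    (E A : M →ₗ[K] V)
    (hreg : ∃ lam : K, Function.Bijective (lam • E + A)) :
    ∃ mu : K,
      Function.Bijective
        (mu • E.restrict (p := Submodule.comap A (LinearMap.range E)) (q := LinearMap.range E)
            (fun x _ => LinearMap.mem_range_self E x) +
          A.restrict (p := Submodule.comap A (LinearMap.range E)) (q := LinearMap.range E)
            (fun _ hx => hx)) := by
  obtain ⟨lam, hbij⟩ := hreg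
  refine ⟨lam, ?_, ?_⟩
  · intro x y hxy
    have h1 : lam • E x.1 + A x.1 = lam • E y.1 + A y.1 := by
      have := congrArg Subtype.val hxy
      simpa [LinearMap.restrict_apply] using this
    have := hbij.1 (a₁ := x.1) (a₂ := y.1) (by simpa using h1)
    exact Subtype.ext this
  · rintro ⟨v, hv⟩
    obtain ⟨x, hx⟩ := hbij.2 v
    have hxv : lam • E x + A x = v := by simpa using hx
    have hxm : x ∈ Submodule.comap A (LinearMap.range E) := by
      have : A x = v - lam • E x := by
        rw [← hxv]; abel
      rw [Submodule.mem_comap, this]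
      exact Submodule.sub_mem _ hv (Submodule.smul_mem _ _ (LinearMap.mem_range_self E x))
    refine ⟨⟨x, hxm⟩, ?_⟩
    ext
    simpa [LinearMap.restrict_apply] using hxv
end
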